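/- arXiv:1501.02241 — 3 statements merged into one kernel-verified Lean document; each statement's English description precedes it below -/
import Mathlib

section
/- For every t > 0, the cumulative distribution function of S = min(X1, X2) satisfies P(min(X1, X2) ≤ t) = G(t)^(α1+α3) + G(t)^(α2+α3) - G(t)^(α1+α2+α3). -/
open Real MeasureTheory ProbabilityTheory

/-- Base CDF of the exponentiated generalized Weibull–Gompertz distribution. -/
noncomputable def G (a b c d x : ℝ) : ℝ :=
  1 - Real.exp (-(a * x ^ b * (Real.exp (c * x ^ d) - 1)))

theorem stmt_7 {Ω : Type*} [MeasureSpace Ω] [IsProbabilityMeasure (ℙ : Measure Ω)]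
    (a b c d : ℝ) (ha : 0 < a) (hb : 0 < b) (hc : 0 < c) (hd : 0 < d)
    (α : Fin 3 → ℝ) (hα : ∀ i, 0 < α i)
    (U : Fin 3 → Ω → ℝ) (hmeas : ∀ i, Measurable (U i))
    (hindep : iIndepFun U ℙ)
    (hcdf : ∀ i, ∀ x : ℝ, 0 < x →
      (ℙ {ω | U i ω ≤ x}).toReal = (G a b c d x) ^ (α i))
    (hcdf0 : ∀ i, ∀ x : ℝ, x ≤ 0 → ℙ {ω | U i ω ≤ x} = 0)
    (t : ℝ) (ht : 0 < t) :
    (ℙ {ω | min (max (U 0 ω) (U 2 ω)) (max (U 1 ω) (U 2 ω)) ≤ t}).toReal =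
      (G a b c d t) ^ (α 0 + α 2) + (G a b c d t) ^ (α 1 + α 2) -
        (G a b c d t) ^ (α 0 + α 1 + α 2) := by
  set g := G a b c d t with hgdef
  have hg : 0 < g := by
    have h1 : 0 < t ^ b := Real.rpow_pos_of_pos ht b
    have h2 : 0 < t ^ d := Real.rpow_pos_of_pos ht d
    have h3 : 1 < Real.exp (c * t ^ d) := by
      rw [show (1:ℝ) = Real.exp 0 from (Real.exp_zero).symm]
      exact Real.exp_lt_exp.mpr (by positivity)
    have : 0 < a * t ^ b * (Real.exp (c * t ^ d) - 1) := by
      have := sub_pos.mpr h3; positivity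
    have : Real.exp (-(a * t ^ b * (Real.exp (c * t ^ d) - 1))) < 1 := by
      rw [Real.exp_lt_one_iff]; linarith
    simp only [hgdef, G]; linarith
  set B : Fin 3 → Set Ω := fun i => U i ⁻¹' Set.Iic t with hBdef
  have hBmeas : ∀ i, MeasurableSet (B i) := fun i => (hmeas i) measurableSet_Iic
  have hBval : ∀ i, (ℙ (B i)).toReal = g ^ (α i) := fun i => hcdf i t ht
  -- the event equals (B 0 ∩ B 2) ∪ (B 1 ∩ B 2)
  have hset : {ω | min (max (U 0 ω) (U 2 ω)) (max (U 1 ω) (U 2 ω)) ≤ t}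
      = (B 0 ∩ B 2) ∪ (B 1 ∩ B 2) := by
    ext ω
    simp [hBdef, min_le_iff, max_le_iff, Set.mem_union]
  -- pairwise independence
  have h02 : ℙ (B 0 ∩ B 2) = ℙ (B 0) * ℙ (B 2) :=
    (hindep.indepFun (by decide : (0 : Fin 3) ≠ 2)).measure_inter_preimage_eq_mul
      _ _ measurableSet_Iic measurableSet_Iic
  have h12 : ℙ (B 1 ∩ B 2) = ℙ (B 1) * ℙ (B 2) :=
    (hindep.indepFun (by decide : (1 : Fin 3) ≠ 2)).measure_inter_preimage_eq_mul
      _ _ measurableSet_Iic measurableSet_Iic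
  have htriple : ℙ (B 0 ∩ B 1 ∩ B 2) = ℙ (B 0) * ℙ (B 1) * ℙ (B 2) := by
    have h := hindep.meas_iInter (s := B)
      (fun i => ⟨Set.Iic t, measurableSet_Iic, rfl⟩)
    have hI : (⋂ i, B i) = B 0 ∩ B 1 ∩ B 2 := by
      ext ω; simp [Set.mem_iInter, Fin.forall_fin_succ, and_assoc]
    rw [hI] at h
    rw [h, Fin.prod_univ_three]
  have hinter : (B 0 ∩ B 2) ∩ (B 1 ∩ B 2) = B 0 ∩ B 1 ∩ B 2 := by
    ext ω; simp [Set.mem_inter_iff]; tauto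
  have hkey : ℙ ((B 0 ∩ B 2) ∪ (B 1 ∩ B 2)) + ℙ (B 0 ∩ B 1 ∩ B 2)
      = ℙ (B 0 ∩ B 2) + ℙ (B 1 ∩ B 2) := by
    rw [← hinter]
    exact measure_union_add_inter _ ((hBmeas 1).inter (hBmeas 2))
  have hfin : ∀ s : Set Ω, ℙ s ≠ ⊤ := fun s => measure_ne_top ℙ s
  have htr : (ℙ ((B 0 ∩ B 2) ∪ (B 1 ∩ B 2))).toReal + (ℙ (B 0 ∩ B 1 ∩ B 2)).toReal
      = (ℙ (B 0 ∩ B 2)).toReal + (ℙ (B 1 ∩ B 2)).toReal := by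
    rw [← ENNReal.toReal_add (hfin _) (hfin _), ← ENNReal.toReal_add (hfin _) (hfin _), hkey]
  have e02 : (ℙ (B 0 ∩ B 2)).toReal = g ^ (α 0 + α 2) := by
    rw [h02, ENNReal.toReal_mul, hBval, hBval, Real.rpow_add hg]
  have e12 : (ℙ (B 1 ∩ B 2)).toReal = g ^ (α 1 + α 2) := by
    rw [h12, ENNReal.toReal_mul, hBval, hBval, Real.rpow_add hg]
  have e012 : (ℙ (B 0 ∩ B 1 ∩ B 2)).toReal = g ^ (α 0 + α 1 + α 2) := by
    rw [htriple, ENNReal.toReal_mul, ENNReal.toReal_mul, hBval, hBval, hBval,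
      Real.rpow_add hg, Real.rpow_add hg]
  rw [hset]
  linarith [htr, e02, e12, e012]
end

section
/- For all x1, x2 > 0, the joint reliability function satisfies P(X1 > x1, X2 > x2) = 1 - G(x1)^(α1+α3) - G(x2)^(α2+α3) + G(x1)^(α1) * G(x2)^(α2) * G(min(x1, x2))^(α3). -/
open Real MeasureTheory ProbabilityTheory

lemma G_pos {a b c d x : ℝ} (ha : 0 < a) (hc : 0 < c) (hx : 0 < x) :
    0 < G a b c d x := by
  have hxb : 0 < x ^ b := Real.rpow_pos_of_pos hx b
  have hxd : 0 < x ^ d := Real.rpow_pos_of_pos hx d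
  have h1 : 1 < Real.exp (c * x ^ d) := by
    rw [← Real.exp_zero]
    exact Real.exp_lt_exp.mpr (by positivity)
  have ht : 0 < a * x ^ b * (Real.exp (c * x ^ d) - 1) := by
    have := sub_pos.mpr h1
    positivity
  have : Real.exp (-(a * x ^ b * (Real.exp (c * x ^ d) - 1))) < 1 :=
    Real.exp_lt_one_iff.mpr (by linarith)
  unfold G; linarith

theorem stmt_9 {Ω : Type*} [MeasureSpace Ω] [IsProbabilityMeasure (ℙ : Measure Ω)]
    (a b c d : ℝ) (ha : 0 < a) (hb : 0 < b) (hc : 0 < c) (hd : 0 < d)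
    (α : Fin 3 → ℝ) (hα : ∀ i, 0 < α i)
    (U : Fin 3 → Ω → ℝ) (hmeas : ∀ i, Measurable (U i))
    (hindep : iIndepFun U ℙ)
    (hcdf : ∀ i, ∀ x : ℝ, 0 < x →
      (ℙ {ω | U i ω ≤ x}).toReal = (G a b c d x) ^ (α i))
    (hcdf0 : ∀ i, ∀ x : ℝ, x ≤ 0 → ℙ {ω | U i ω ≤ x} = 0)
    (x₁ x₂ : ℝ) (hx₁ : 0 < x₁) (hx₂ : 0 < x₂) :
    (ℙ {ω | x₁ < max (U 0 ω) (U 2 ω) ∧ x₂ < max (U 1 ω) (U 2 ω)}).toReal =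
      1 - (G a b c d x₁) ^ (α 0 + α 2) - (G a b c d x₂) ^ (α 1 + α 2) +
        (G a b c d x₁) ^ (α 0) * (G a b c d x₂) ^ (α 1) *
          (G a b c d (min x₁ x₂)) ^ (α 2) := by
  have hG1 : 0 < G a b c d x₁ := G_pos ha hc hx₁
  have hG2 : 0 < G a b c d x₂ := G_pos ha hc hx₂
  set A : Set Ω := U 0 ⁻¹' Set.Iic x₁ ∩ U 2 ⁻¹' Set.Iic x₁ with hA
  set B : Set Ω := U 1 ⁻¹' Set.Iic x₂ ∩ U 2 ⁻¹' Set.Iic x₂ with hB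
  have hmA : MeasurableSet A := ((hmeas 0) measurableSet_Iic).inter ((hmeas 2) measurableSet_Iic)
  have hmB : MeasurableSet B := ((hmeas 1) measurableSet_Iic).inter ((hmeas 2) measurableSet_Iic)
  have hset : {ω | x₁ < max (U 0 ω) (U 2 ω) ∧ x₂ < max (U 1 ω) (U 2 ω)} = (A ∪ B)ᶜ := by
    ext ω
    simp only [hA, hB, Set.mem_setOf_eq, Set.mem_compl_iff, Set.mem_union, Set.mem_inter_iff,
      Set.mem_preimage, Set.mem_Iic, not_or, not_and_or, not_le, lt_max_iff, lt_sup_iff]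
  -- measure of A
  have hpA : ℙ A = ℙ (U 0 ⁻¹' Set.Iic x₁) * ℙ (U 2 ⁻¹' Set.Iic x₁) :=
    (hindep.indepFun (i := 0) (j := 2) (by decide)).measure_inter_preimage_eq_mul
      _ _ measurableSet_Iic measurableSet_Iic
  have hpB : ℙ B = ℙ (U 1 ⁻¹' Set.Iic x₂) * ℙ (U 2 ⁻¹' Set.Iic x₂) :=
    (hindep.indepFun (i := 1) (j := 2) (by decide)).measure_inter_preimage_eq_mul
      _ _ measurableSet_Iic measurableSet_Iic
  -- measure of A ∩ B
  have hAB : A ∩ B = ⋂ i, U i ⁻¹' (![Set.Iic x₁, Set.Iic x₂, Set.Iic (min x₁ x₂)] i) := by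
    ext ω
    simp [hA, hB, Fin.forall_fin_succ, Set.mem_iInter, le_min_iff]
    tauto
  have hpAB : ℙ (A ∩ B) = ℙ (U 0 ⁻¹' Set.Iic x₁) * ℙ (U 1 ⁻¹' Set.Iic x₂) *
      ℙ (U 2 ⁻¹' Set.Iic (min x₁ x₂)) := by
    rw [hAB, hindep.meas_iInter
      (fun i => ⟨![Set.Iic x₁, Set.Iic x₂, Set.Iic (min x₁ x₂)] i,
        by fin_cases i <;> exact measurableSet_Iic, rfl⟩), Fin.prod_univ_three]
    rfl
  -- toReal arithmetic
  have hne : ∀ s : Set Ω, ℙ s ≠ ⊤ := fun s => measure_ne_top ℙ s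
  have hunion : (ℙ (A ∪ B)).toReal = (ℙ A).toReal + (ℙ B).toReal - (ℙ (A ∩ B)).toReal := by
    have h := measure_union_add_inter (μ := ℙ) A hmB
    have h' := congrArg ENNReal.toReal h
    rw [ENNReal.toReal_add (hne _) (hne _), ENNReal.toReal_add (hne _) (hne _)] at h'
    linarith
  have hcompl : (ℙ (A ∪ B)ᶜ).toReal = 1 - (ℙ (A ∪ B)).toReal := by
    rw [prob_compl_eq_one_sub (hmA.union hmB), ENNReal.toReal_sub_of_le prob_le_one ENNReal.one_ne_top,
      ENNReal.toReal_one]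
  have e0 : (ℙ (U 0 ⁻¹' Set.Iic x₁)).toReal = (G a b c d x₁) ^ (α 0) := hcdf 0 x₁ hx₁
  have e1 : (ℙ (U 1 ⁻¹' Set.Iic x₂)).toReal = (G a b c d x₂) ^ (α 1) := hcdf 1 x₂ hx₂
  have e21 : (ℙ (U 2 ⁻¹' Set.Iic x₁)).toReal = (G a b c d x₁) ^ (α 2) := hcdf 2 x₁ hx₁
  have e22 : (ℙ (U 2 ⁻¹' Set.Iic x₂)).toReal = (G a b c d x₂) ^ (α 2) := hcdf 2 x₂ hx₂
  have e2m : (ℙ (U 2 ⁻¹' Set.Iic (min x₁ x₂))).toReal = (G a b c d (min x₁ x₂)) ^ (α 2) :=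
    hcdf 2 _ (lt_min hx₁ hx₂)
  rw [hset, hcompl, hunion, hpA, hpB, hpAB, ENNReal.toReal_mul, ENNReal.toReal_mul,
    ENNReal.toReal_mul, ENNReal.toReal_mul, e0, e1, e21, e22, e2m,
    Real.rpow_add hG1, Real.rpow_add hG2]
  ring
end

section
/- Fix α1, α2, α3 > 0 and, for 0 < x1 < x2, set R(x1, x2) = 1 - G(x1)^(α1+α3) - G(x2)^(α2+α3) + G(x1)^(α1+α3) * G(x2)^(α2). Then R(x1, x2) > 0 and the first component of the hazard gradient satisfies -∂/∂x1 [ln R(x1, x2)] = f(x1; α1+α3) * (1 - G(x2)^(α2)) / R(x1, x2), where f(x1; α1+α3) = a*b*(α1+α3)*x1^(b-1)*exp(-a*x1^b*(exp(c*x1^d)-1)+c*x1^d)*(1+(c*d/b)*x1^d-exp(-c*x1^d))*G(x1)^(α1+α3-1). -/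
open Real

/-- EGWGD(a,b,c,d,α) probability density. -/
noncomputable def egwgdPdf (a b c d α x : ℝ) : ℝ :=
  a * b * α * x ^ (b - 1) *
    Real.exp (-(a * x ^ b * (Real.exp (c * x ^ d) - 1)) + c * x ^ d) *
    (1 + (c * d / b) * x ^ d - Real.exp (-(c * x ^ d))) *
    (G a b c d x) ^ (α - 1)

lemma G_mem (a b c d x : ℝ) (ha : 0 < a) (hb : 0 < b) (hc : 0 < c) (hd : 0 < d)
    (hx : 0 < x) : 0 < G a b c d x ∧ G a b c d x < 1 := by
  have hxb : (0:ℝ) < x ^ b := rpow_pos_of_pos hx b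
  have hxd : (0:ℝ) < c * x ^ d := mul_pos hc (rpow_pos_of_pos hx d)
  have hE : (1:ℝ) < Real.exp (c * x ^ d) := by
    simpa using Real.exp_lt_exp.2 hxd |>.trans_le (le_refl _) |>.trans_le (le_refl _)
  have hT : 0 < a * x ^ b * (Real.exp (c * x ^ d) - 1) :=
    mul_pos (mul_pos ha hxb) (by linarith)
  constructor
  · have : Real.exp (-(a * x ^ b * (Real.exp (c * x ^ d) - 1))) < 1 := by
      rw [Real.exp_lt_one_iff]; linarith
    unfold G; linarith
  · have : 0 < Real.exp (-(a * x ^ b * (Real.exp (c * x ^ d) - 1))) := Real.exp_pos _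
    unfold G; linarith

lemma hasDerivAt_Gpow (a b c d α x : ℝ) (ha : 0 < a) (hb : 0 < b) (hc : 0 < c)
    (hd : 0 < d) (hx : 0 < x) :
    HasDerivAt (fun y => G a b c d y ^ α) (egwgdPdf a b c d α x) x := by
  obtain ⟨hG0, hG1⟩ := G_mem a b c d x ha hb hc hd hx
  have hxne : x ≠ 0 := ne_of_gt hx
  have h1 : HasDerivAt (fun y : ℝ => y ^ b) (b * x ^ (b - 1)) x :=
    Real.hasDerivAt_rpow_const (Or.inl hxne)
  have h2 : HasDerivAt (fun y : ℝ => y ^ d) (d * x ^ (d - 1)) x :=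
    Real.hasDerivAt_rpow_const (Or.inl hxne)
  have h3 : HasDerivAt (fun y : ℝ => Real.exp (c * y ^ d) - 1)
      (Real.exp (c * x ^ d) * (c * (d * x ^ (d - 1)))) x :=
    ((h2.const_mul c).exp).sub_const 1
  have hT : HasDerivAt (fun y : ℝ => a * y ^ b * (Real.exp (c * y ^ d) - 1))
      (a * (b * x ^ (b - 1)) * (Real.exp (c * x ^ d) - 1) +
        a * x ^ b * (Real.exp (c * x ^ d) * (c * (d * x ^ (d - 1))))) x :=
    (h1.const_mul a).mul h3
  have hG : HasDerivAt (fun y => G a b c d y)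
      (-(Real.exp (-(a * x ^ b * (Real.exp (c * x ^ d) - 1))) *
        -(a * (b * x ^ (b - 1)) * (Real.exp (c * x ^ d) - 1) +
          a * x ^ b * (Real.exp (c * x ^ d) * (c * (d * x ^ (d - 1))))))) x := by
    unfold G
    exact (hT.neg.exp).const_sub 1
  have hGp := hG.rpow_const (p := α) (Or.inl (ne_of_gt hG0))
  convert hGp using 1
  unfold egwgdPdf
  have hxx : x ^ b * x ^ (d - 1) = x ^ (b - 1) * x ^ d := by
    rw [← rpow_add hx, ← rpow_add hx]; ring_nf
  have key : a * b * x ^ (b - 1) *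
      (Real.exp (c * x ^ d) * (1 + c * d / b * x ^ d - (Real.exp (c * x ^ d))⁻¹)) =
      a * (b * x ^ (b - 1)) * (Real.exp (c * x ^ d) - 1) +
        a * x ^ b * (Real.exp (c * x ^ d) * (c * (d * x ^ (d - 1)))) := by
    have hEE' : Real.exp (c * x ^ d) * (Real.exp (c * x ^ d))⁻¹ = 1 :=
      mul_inv_cancel₀ (Real.exp_ne_zero _)
    have hbb : b * b⁻¹ = 1 := mul_inv_cancel₀ (ne_of_gt hb)
    linear_combination (-(a * c * d * Real.exp (c * x ^ d))) * hxx -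
      (a * b * x ^ (b - 1)) * hEE' +
      (a * c * d * Real.exp (c * x ^ d) * x ^ (b - 1) * x ^ d) * hbb
  rw [Real.exp_add, Real.exp_neg (c * x ^ d)]
  linear_combination (α * G a b c d x ^ (α - 1) *
    Real.exp (-(a * x ^ b * (Real.exp (c * x ^ d) - 1)))) * key

theorem stmt_12 (a b c d : ℝ) (ha : 0 < a) (hb : 0 < b) (hc : 0 < c) (hd : 0 < d)
    (α₁ α₂ α₃ : ℝ) (hα₁ : 0 < α₁) (hα₂ : 0 < α₂) (hα₃ : 0 < α₃)
    (R : ℝ → ℝ → ℝ)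
    (hR : ∀ y₁ y₂ : ℝ, R y₁ y₂ =
      1 - (G a b c d y₁) ^ (α₁ + α₃) - (G a b c d y₂) ^ (α₂ + α₃) +
        (G a b c d y₁) ^ (α₁ + α₃) * (G a b c d y₂) ^ α₂)
    (x₁ x₂ : ℝ) (hx₁ : 0 < x₁) (hx₁₂ : x₁ < x₂) :
    0 < R x₁ x₂ ∧
      -(deriv (fun y₁ : ℝ => Real.log (R y₁ x₂)) x₁) =
        egwgdPdf a b c d (α₁ + α₃) x₁ * (1 - (G a b c d x₂) ^ α₂) / R x₁ x₂ := by
  have hx₂ : 0 < x₂ := hx₁.trans hx₁₂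
  obtain ⟨hG1p, hG1l⟩ := G_mem a b c d x₁ ha hb hc hd hx₁
  obtain ⟨hG2p, hG2l⟩ := G_mem a b c d x₂ ha hb hc hd hx₂
  set g₁ := G a b c d x₁
  set g₂ := G a b c d x₂
  have hA : 0 < α₁ + α₃ := by linarith
  have h1A : g₁ ^ (α₁ + α₃) < 1 := rpow_lt_one hG1p.le hG1l hA
  have h2a : g₂ ^ α₂ < 1 := rpow_lt_one hG2p.le hG2l hα₂
  have h2c : g₂ ^ α₃ < 1 := rpow_lt_one hG2p.le hG2l hα₃
  have h1Ap : 0 < g₁ ^ (α₁ + α₃) := rpow_pos_of_pos hG1p _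
  have h2ap : 0 < g₂ ^ α₂ := rpow_pos_of_pos hG2p _
  have h2cp : 0 < g₂ ^ α₃ := rpow_pos_of_pos hG2p _
  have hsplit : g₂ ^ (α₂ + α₃) = g₂ ^ α₂ * g₂ ^ α₃ := rpow_add hG2p _ _
  have hRpos : 0 < R x₁ x₂ := by
    rw [hR x₁ x₂, hsplit]
    nlinarith
  refine ⟨hRpos, ?_⟩
  have hRne : R x₁ x₂ ≠ 0 := ne_of_gt hRpos
  have hGp := hasDerivAt_Gpow a b c d (α₁ + α₃) x₁ ha hb hc hd hx₁
  set F := egwgdPdf a b c d (α₁ + α₃) x₁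
  have hRd : HasDerivAt (fun y₁ => R y₁ x₂) (F * (g₂ ^ α₂ - 1)) x₁ := by
    have : (fun y₁ => R y₁ x₂) = fun y₁ =>
        1 - (G a b c d y₁) ^ (α₁ + α₃) - g₂ ^ (α₂ + α₃) +
          (G a b c d y₁) ^ (α₁ + α₃) * g₂ ^ α₂ := funext fun y => hR y x₂
    rw [this]
    have h := (((hGp.const_sub 1).sub_const (g₂ ^ (α₂ + α₃)))).add
      (hGp.mul_const (g₂ ^ α₂))
    exact h.congr_deriv (by ring)
  have hlog : HasDerivAt (fun y₁ => Real.log (R y₁ x₂))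
      (F * (g₂ ^ α₂ - 1) / R x₁ x₂) x₁ := hRd.log hRne
  rw [hlog.deriv]
  field_simp
  ring
end
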